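/- arXiv:2107.10925 — 7 statements merged into one kernel-verified Lean document; each statement's English description precedes it below -/
import Mathlib

section
/- Let G be a group, ρ : G → G a retraction onto a subgroup K₁ = ρ(G), and K₂ < G a separable subgroup with ρ(K₂) ⊆ K₂. Then the double coset K₁K₂ = {k₁k₂ : k₁ ∈ K₁, k₂ ∈ K₂} is separable in G, i.e. closed in the profinite topology. -/
/-- A subset `A` of a group `G` is separable if it is closed in the profinite topology. -/
def SeparableIn {G : Type*} [Group G] (A : Set G) : Prop :=
  ∀ g ∉ A, ∃ N : Subgroup G, N.Normal ∧ N.FiniteIndex ∧ ∀ a ∈ A, g⁻¹ * a ∉ N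

/-- If `ρ : G → G` is a retraction onto `K₁ = ρ(G)` and `K₂ ≤ G` is a separable subgroup with
`ρ(K₂) ⊆ K₂`, then the double coset `K₁K₂` is separable in `G`. -/
theorem doubleCoset_separable {G : Type*} [Group G]
    (ρ : G →* G) (hρ : ρ.comp ρ = ρ)
    (K₂ : Subgroup G) (hK₂ : SeparableIn (K₂ : Set G))
    (hρK₂ : ∀ x ∈ K₂, ρ x ∈ K₂) :
    SeparableIn {x : G | ∃ k₁ ∈ ρ.range, ∃ k₂ ∈ K₂, x = k₁ * k₂} := by
  intro g hg
  -- key element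
  have hh : (ρ g)⁻¹ * g ∉ K₂ := by
    intro hmem
    exact hg ⟨ρ g, ⟨g, rfl⟩, (ρ g)⁻¹ * g, hmem, by group⟩
  obtain ⟨N, hN, hNfin, hNsep⟩ := hK₂ _ hh
  refine ⟨N ⊓ N.comap ρ, ?_, ?_, ?_⟩
  · exact ⟨fun x hx c => ⟨hN.conj_mem _ hx.1 c, by
      simpa [map_mul] using hN.conj_mem _ hx.2 (ρ c)⟩⟩
  · haveI := hNfin
    haveI : (N.comap ρ).FiniteIndex := by
      constructor
      rw [Subgroup.index_comap]
      intro h0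
      haveI := hN
      have hd : N.relIndex ρ.range ∣ N.index := Subgroup.relIndex_dvd_index_of_normal N ρ.range
      rw [h0] at hd
      exact hNfin.index_ne_zero (zero_dvd_iff.mp hd)
    infer_instance
  · rintro a ⟨k₁, ⟨y, rfl⟩, k₂, hk₂, rfl⟩ hmemM
    obtain ⟨hn, hρn⟩ := hmemM
    -- k₂' := (ρ a)⁻¹ * a ∈ K₂
    set a := ρ y * k₂ with ha
    have hρk₁ : ρ (ρ y) = ρ y := DFunLike.congr_fun hρ y
    have hk₂' : (ρ a)⁻¹ * a ∈ K₂ := by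
      have : (ρ a)⁻¹ * a = (ρ k₂)⁻¹ * k₂ := by
        simp [ha, map_mul, hρk₁, mul_assoc]
      rw [this]
      exact mul_mem (inv_mem (hρK₂ _ hk₂)) hk₂
    refine hNsep _ hk₂' ?_
    set n := g⁻¹ * a with hndef
    have key : ((ρ g)⁻¹ * g)⁻¹ * ((ρ a)⁻¹ * a) =
        ((g⁻¹ * ρ g) * (ρ n)⁻¹ * (g⁻¹ * ρ g)⁻¹) * n := by
      have : ρ a = ρ g * ρ n := by rw [← map_mul]; simp [hndef]
      rw [this, show a = g * n by simp [hndef]]; group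
    rw [key]
    exact mul_mem (hN.conj_mem _ (inv_mem hρn) _) hn
end

section
/- Let G be a group, ρ : G → G a retraction onto a subgroup K₂ = ρ(G), and K₁, K₃ < G subgroups with ρ(K₁) ⊆ K₁ and ρ(K₃) ⊆ K₃, such that every double coset K₁gK₃ (for g ∈ G) is separable in G. Then the triple coset K₁K₂K₃ = {k₁k₂k₃ : kᵢ ∈ Kᵢ} is separable in G. -/
/-- If `ρ : G → G` is a retraction onto `K₂ = ρ(G)`, and `K₁, K₃ ≤ G` are subgroups with
`ρ(K₁) ⊆ K₁`, `ρ(K₃) ⊆ K₃`, such that every double coset `K₁gK₃` is separable,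
then the triple coset `K₁K₂K₃` is separable in `G`. -/
theorem tripleCoset_separable {G : Type*} [Group G]
    (ρ : G →* G) (hρ : ρ.comp ρ = ρ)
    (K₁ K₃ : Subgroup G)
    (hρK₁ : ∀ x ∈ K₁, ρ x ∈ K₁) (hρK₃ : ∀ x ∈ K₃, ρ x ∈ K₃)
    (hdc : ∀ g : G, SeparableIn {x : G | ∃ k₁ ∈ K₁, ∃ k₃ ∈ K₃, x = k₁ * g * k₃}) :
    SeparableIn {x : G | ∃ k₁ ∈ K₁, ∃ k₂ ∈ ρ.range, ∃ k₃ ∈ K₃, x = k₁ * k₂ * k₃} := by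
  have hρρ : ∀ x, ρ (ρ x) = ρ x := fun x => by
    conv_rhs => rw [← hρ]
    rfl
  intro g hg
  -- g is not in the double coset K₁ (ρ g) K₃
  have hgD : g ∉ {x : G | ∃ k₁ ∈ K₁, ∃ k₃ ∈ K₃, x = k₁ * ρ g * k₃} := by
    rintro ⟨k₁, hk₁, k₃, hk₃, h⟩
    exact hg ⟨k₁, hk₁, ρ g, ⟨g, rfl⟩, k₃, hk₃, h⟩
  obtain ⟨N, hNnorm, hNfi, hNsep⟩ := hdc (ρ g) g hgD
  haveI := hNnorm
  haveI := hNfi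
  haveI hcfi : (N.comap ρ).FiniteIndex := by
    constructor
    rw [Subgroup.index_comap]
    intro h
    have hdvd : N.relIndex ρ.range ∣ N.index := Subgroup.relIndex_dvd_index_of_normal N ρ.range
    rw [h] at hdvd
    exact hNfi.index_ne_zero (zero_dvd_iff.mp hdvd)
  have hMnorm : (N ⊓ N.comap ρ).Normal := by
    constructor
    intro x hx y
    rw [Subgroup.mem_inf] at hx ⊢
    refine ⟨hNnorm.conj_mem x hx.1 y, Subgroup.mem_comap.mpr ?_⟩
    rw [map_mul, map_mul, map_inv]
    exact hNnorm.conj_mem _ (Subgroup.mem_comap.mp hx.2) _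
  refine ⟨N ⊓ N.comap ρ, hMnorm, inferInstance, ?_⟩
  rintro a ⟨k₁, hk₁, _, ⟨c, rfl⟩, k₃, hk₃, rfl⟩ hmem
  rw [Subgroup.mem_inf] at hmem
  obtain ⟨hm1, hm2⟩ := hmem
  rw [Subgroup.mem_comap] at hm2
  -- set up notation
  set a := k₁ * ρ c * k₃ with ha
  have hρa : ρ a = ρ k₁ * ρ c * ρ k₃ := by
    simp [ha, map_mul, hρρ]
  set n : G := (ρ g)⁻¹ * ρ a with hn
  have hnN : n ∈ N := by
    simpa [hn, map_mul, map_inv] using hm2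
  set k₃' : G := (ρ k₃)⁻¹ * k₃ with hk₃'
  have hk₃'K : k₃' ∈ K₃ := mul_mem (inv_mem (hρK₃ _ hk₃)) hk₃
  set n' : G := k₃'⁻¹ * n * k₃' with hn'
  have hn'N : n' ∈ N := by
    simpa [hn'] using hNnorm.conj_mem n hnN k₃'⁻¹
  have key : a * n'⁻¹ = (k₁ * (ρ k₁)⁻¹) * ρ g * k₃' := by
    simp only [hn', hn, hρa, hk₃']
    simp only [ha]
    group
  have hin : a * n'⁻¹ ∈ {x : G | ∃ k₁ ∈ K₁, ∃ k₃ ∈ K₃, x = k₁ * ρ g * k₃} :=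
    ⟨k₁ * (ρ k₁)⁻¹, mul_mem hk₁ (inv_mem (hρK₁ _ hk₁)), k₃', hk₃'K, key⟩
  have := hNsep _ hin
  apply this
  have : g⁻¹ * (a * n'⁻¹) = (g⁻¹ * a) * n'⁻¹ := by group
  rw [this]
  exact mul_mem hm1 (inv_mem hn'N)
end

section
/- Let A be a finitely generated free abelian group and let A₁, …, Aₙ be subgroups of A that are linearly independent, meaning that if aᵢ ∈ Aᵢ for each i and a₁ + ⋯ + aₙ = 0 then every aᵢ = 0. Then A commands (A₁, …, Aₙ): there exist finite-index subgroups Ȧᵢ ≤ Aᵢ (in fact one can take Ȧᵢ = Aᵢ) such that for any finite-index subgroups A′ᵢ ≤ Ȧᵢ there exists a finite-index subgroup A′ ≤ A with Aᵢ ∩ A′ = A′ᵢ for all i. -/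
/-- The submodule of elements annihilated by some positive natural number. -/
private def natTorsion (Q : Type*) [AddCommGroup Q] : Submodule ℤ Q where
  carrier := {x | ∃ k : ℕ, 0 < k ∧ k • x = 0}
  zero_mem' := ⟨1, one_pos, smul_zero 1⟩
  add_mem' := by
    rintro x y ⟨k, hk, hkx⟩ ⟨l, hl, hly⟩
    refine ⟨k * l, Nat.mul_pos hk hl, ?_⟩
    rw [smul_add]
    rw [show k * l = l * k from mul_comm k l, mul_smul, hkx, smul_zero,
      mul_comm l k, mul_smul, hly, smul_zero, add_zero]
  smul_mem' := by
    rintro z x ⟨k, hk, hkx⟩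
    exact ⟨k, hk, by rw [smul_comm, hkx, smul_zero]⟩

/-- The torsion elements of a finitely generated `ℤ`-module are annihilated by a single
positive natural number. -/
private lemma exists_torsion_annihilator (Q : Type*) [AddCommGroup Q] (hQ : AddGroup.FG Q) :
    ∃ e : ℕ, 0 < e ∧ ∀ y : Q, (∃ c : ℕ, 0 < c ∧ c • y = 0) → e • y = 0 := by
  classical
  haveI : Module.Finite ℤ Q := Module.Finite.iff_addGroup_fg.mpr hQ
  haveI : IsNoetherian ℤ Q := inferInstance
  obtain ⟨s, hs⟩ := IsNoetherian.noetherian (natTorsion Q)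
  set c : Q → ℕ := fun x => if h : ∃ k : ℕ, 0 < k ∧ k • x = 0 then h.choose else 1 with hc
  have hcpos : ∀ x, 0 < c x := by
    intro x
    by_cases h : ∃ k : ℕ, 0 < k ∧ k • x = 0
    · simp only [hc, dif_pos h]; exact h.choose_spec.1
    · simp [hc, dif_neg h]
  have hczero : ∀ x : Q, (∃ k : ℕ, 0 < k ∧ k • x = 0) → c x • x = 0 := by
    intro x h
    simp only [hc, dif_pos h]
    exact h.choose_spec.2
  refine ⟨∏ x ∈ s, c x, Finset.prod_pos fun x _ => hcpos x, ?_⟩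
  intro y hy
  have hytor : y ∈ Submodule.span ℤ (s : Set Q) := hs ▸ hy
  refine Submodule.span_induction (p := fun z _ => (∏ x ∈ s, c x) • z = 0) ?_ ?_ ?_ ?_ hytor
  · intro x hx
    have hxtor : x ∈ natTorsion Q := hs ▸ Submodule.subset_span hx
    have hmem : (x : Q) ∈ s := by simpa using hx
    have h2 : c x • x = 0 := hczero x hxtor
    calc (∏ z ∈ s, c z) • x = ((∏ z ∈ s.erase x, c z) * c x) • x := by
          rw [Finset.prod_erase_mul _ _ hmem]
      _ = (∏ z ∈ s.erase x, c z) • (c x • x) := by rw [mul_smul]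
      _ = 0 := by rw [h2, smul_zero]
  · simp
  · intro u v _ _ hu hv; rw [smul_add, hu, hv, add_zero]
  · intro a u _ hu
    rw [smul_comm, hu, smul_zero]

/-- If `A` is a finitely generated free abelian group and `S₁, …, Sₙ` are linearly independent
subgroups (any tuple of elements summing to zero is identically zero), then `A` commands
`(S₁, …, Sₙ)`: there are finite-index subgroups `Ṡᵢ ≤ Sᵢ` such that for all finite-index
subgroups `S′ᵢ ≤ Ṡᵢ` there is a finite-index subgroup `B ≤ A` with `Sᵢ ∩ B = S′ᵢ` for all `i`. -/
theorem freeAbelian_commands_of_linearIndependent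
    {A : Type*} [AddCommGroup A] [Module.Free ℤ A] [Module.Finite ℤ A]
    (n : ℕ) (S : Fin n → AddSubgroup A)
    (hind : ∀ a : Fin n → A, (∀ i, a i ∈ S i) → (∑ i, a i) = 0 → ∀ i, a i = 0) :
    ∃ Sd : Fin n → AddSubgroup A,
      (∀ i, Sd i ≤ S i ∧ ((Sd i).addSubgroupOf (S i)).FiniteIndex) ∧
      ∀ S' : Fin n → AddSubgroup A,
        (∀ i, S' i ≤ Sd i) → (∀ i, ((S' i).addSubgroupOf (S i)).FiniteIndex) →
        ∃ B : AddSubgroup A, B.FiniteIndex ∧ ∀ i, S i ⊓ B = S' i := by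
  classical
  refine ⟨S, fun i => ⟨le_rfl, ?_⟩, ?_⟩
  · rw [AddSubgroup.addSubgroupOf_self]
    infer_instance
  intro S' hle hfi
  -- the exponent of each quotient S i / S' i
  set d : Fin n → ℕ := fun i => ((S' i).addSubgroupOf (S i)).index with hd
  have hdmem : ∀ i, ∀ x ∈ S i, d i • x ∈ S' i := by
    intro i x hx
    have h1 := AddSubgroup.nsmul_index_mem ((S' i).addSubgroupOf (S i)) (⟨x, hx⟩ : S i)
    rw [AddSubgroup.mem_addSubgroupOf] at h1
    simpa using h1
  set m : ℕ := ∏ i, d i with hm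
  have hm0 : 0 < m := by
    rw [hm]
    exact Finset.prod_pos fun i _ => Nat.pos_of_ne_zero (hfi i).index_ne_zero
  have hmmem : ∀ i, ∀ x ∈ S i, m • x ∈ S' i := by
    intro i x hx
    have h1 : m = (∏ j ∈ Finset.univ.erase i, d j) * d i :=
      (Finset.prod_erase_mul _ _ (Finset.mem_univ i)).symm
    rw [h1, mul_smul]
    exact AddSubgroup.nsmul_mem _ (hdmem i x hx) _
  -- pass to submodules
  set P : Fin n → Submodule ℤ A := fun i => (S i).toIntSubmodule with hP
  set P' : Fin n → Submodule ℤ A := fun i => (S' i).toIntSubmodule with hP'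
  set T : Submodule ℤ A := ⨆ i, P i with hT
  set U : Submodule ℤ A := ⨆ i, P' i with hU
  have hUT : U ≤ T := iSup_mono fun i => by
    intro x hx
    exact (hle i : S' i ≤ S i) hx
  have hmTU : ∀ t ∈ T, m • t ∈ U := by
    intro t ht
    refine Submodule.iSup_induction (motive := fun z => m • z ∈ U) P ht ?_ ?_ ?_
    · intro i x hx
      exact Submodule.mem_iSup_of_mem i (by exact hmmem i x hx)
    · simp
    · intro x y hx hy; rw [smul_add]; exact add_mem hx hy
  -- quotient by m • T and its torsion annihilator
  set N : Submodule ℤ A := Submodule.map ((m : ℤ) • (LinearMap.id : A →ₗ[ℤ] A)) T with hN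
  obtain ⟨e, he0, he⟩ := exists_torsion_annihilator (A ⧸ N)
    (Module.Finite.iff_addGroup_fg.mp inferInstance)
  set M : ℕ := m * e with hM
  have hM0 : 0 < M := Nat.mul_pos hm0 he0
  have hkey : ∀ a : A, M • a ∈ T → M • a ∈ U := by
    intro a ha
    -- the image of a in A ⧸ N is torsion
    have htor : ∃ c : ℕ, 0 < c ∧ c • (N.mkQ a) = 0 := by
      refine ⟨m * M, Nat.mul_pos hm0 hM0, ?_⟩
      have h1 : (m * M) • a ∈ N := ⟨M • a, ha, by
        rw [LinearMap.smul_apply, LinearMap.id_apply, Nat.cast_smul_eq_nsmul, ← mul_smul]⟩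
      rw [← map_nsmul, Submodule.mkQ_apply, Submodule.Quotient.mk_eq_zero]
      exact h1
    have h2 : e • (N.mkQ a) = 0 := he _ htor
    have h3 : e • a ∈ N := by
      rw [← Submodule.Quotient.mk_eq_zero, ← Submodule.mkQ_apply, map_nsmul]
      exact h2
    obtain ⟨t, htT, htt⟩ := h3
    have htt' : e • a = m • t := by
      rw [LinearMap.smul_apply, LinearMap.id_apply, Nat.cast_smul_eq_nsmul] at htt
      exact htt.symm
    have : M • a = m • (m • t) := by
      rw [hM, mul_smul, htt']
    rw [this]
    exact hmTU (m • t) (nsmul_mem htT m)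
  -- the finite-index subgroup B
  set K : Submodule ℤ A := Submodule.map ((M : ℤ) • (LinearMap.id : A →ₗ[ℤ] A)) ⊤ with hK
  set B0 : Submodule ℤ A := U ⊔ K with hB0
  refine ⟨B0.toAddSubgroup, ?_, ?_⟩
  · -- finite index
    have hKB : K ≤ B0 := le_sup_right
    have htorK : Module.IsTorsion ℤ (A ⧸ K) := by
      intro x
      obtain ⟨a, rfl⟩ := Submodule.Quotient.mk_surjective K x
      refine ⟨⟨(M : ℤ), mem_nonZeroDivisors_of_ne_zero (by exact_mod_cast hM0.ne')⟩, ?_⟩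
      rw [Submonoid.smul_def, ← Submodule.Quotient.mk_smul, Submodule.Quotient.mk_eq_zero]
      exact ⟨a, trivial, by simp⟩
    have hfinK : Finite (A ⧸ K) := Module.finite_of_fg_torsion _ htorK
    have hfinB : Finite (A ⧸ B0) := by
      have hsurj : Function.Surjective (Submodule.mapQ K B0 LinearMap.id
          (fun x hx => hKB hx)) := by
        intro x
        obtain ⟨a, rfl⟩ := Submodule.Quotient.mk_surjective B0 x
        exact ⟨Submodule.Quotient.mk a, rfl⟩
      exact Finite.of_surjective _ hsurj
    haveI : Finite (A ⧸ B0.toAddSubgroup) := hfinB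
    exact AddSubgroup.finiteIndex_of_finite_quotient
  · -- the intersection property
    intro i
    refine le_antisymm ?_ (le_inf (hle i) ?_)
    · intro x hx
      rw [AddSubgroup.mem_inf] at hx
      obtain ⟨hxS, hxB⟩ := hx
      rw [Submodule.mem_toAddSubgroup] at hxB
      rw [hB0, Submodule.mem_sup] at hxB
      obtain ⟨u, hu, k, hk, hux⟩ := hxB
      obtain ⟨a, -, rfl⟩ := hk
      have hMa : ((M : ℤ) • (LinearMap.id : A →ₗ[ℤ] A)) a = M • a := by
        simp [Nat.cast_smul_eq_nsmul]
      rw [hMa] at hux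
      -- M • a = x - u lies in T
      have hMaT : M • a ∈ T := by
        have hxT : x ∈ T := Submodule.mem_iSup_of_mem i (by exact hxS)
        have h1 : M • a = x - u := by rw [← hux]; abel
        rw [h1]
        exact sub_mem hxT (hUT hu)
      have hMaU : M • a ∈ U := hkey a hMaT
      have hxU : x ∈ U := by rw [← hux]; exact add_mem hu hMaU
      -- decompose x as a sum over the S' j and use independence
      rw [hU, Submodule.mem_iSup_iff_exists_finsupp] at hxU
      obtain ⟨f, hf, hfsum⟩ := hxU
      have hsum : ∑ j, f j = x := by
        rw [← hfsum, Finsupp.sum_fintype]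
        intro j; rfl
      set g : Fin n → A := fun j => f j - (if j = i then x else 0) with hg
      have hgmem : ∀ j, g j ∈ S j := by
        intro j
        by_cases h : j = i
        · subst h
          simp only [hg, if_pos rfl]
          exact AddSubgroup.sub_mem _ (hle j (by exact hf j)) hxS
        · simp only [hg, if_neg h, sub_zero]
          exact hle j (by exact hf j)
      have hgsum : ∑ j, g j = 0 := by
        rw [hg]
        rw [Finset.sum_sub_distrib, hsum, Finset.sum_ite_eq' Finset.univ i (fun _ => x)]
        simp
      have h5 : f i = x := by simpa [hg, sub_eq_zero] using hind g hgmem hgsum i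
      have hfi' : f i ∈ S' i := by exact hf i
      rwa [← h5]
    · intro x hx
      rw [Submodule.mem_toAddSubgroup]
      exact (le_sup_left : U ≤ B0) (Submodule.mem_iSup_of_mem i (by exact hx) : x ∈ U)
end

section
/- Let A be a finitely generated free abelian group and A₁, …, Aₙ subgroups that are NOT linearly independent (i.e. there exist aᵢ ∈ Aᵢ, not all zero, with a₁ + ⋯ + aₙ = 0). Then A does not command (A₁, …, Aₙ): for any finite-index subgroups Ȧᵢ ≤ Aᵢ there exist finite-index subgroups A′ᵢ ≤ Ȧᵢ such that no finite-index subgroup A′ ≤ A satisfies Aᵢ ∩ A′ = A′ᵢ for all i. -/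
/-- If `A` is a finitely generated free abelian group and `S₁, …, Sₙ` are subgroups that are
NOT linearly independent, then `A` does not command `(S₁, …, Sₙ)`: for any finite-index
subgroups `Ṡᵢ ≤ Sᵢ` there are finite-index subgroups `S′ᵢ ≤ Ṡᵢ` such that no finite-index
subgroup `B ≤ A` satisfies `Sᵢ ∩ B = S′ᵢ` for all `i`. -/
theorem freeAbelian_not_commands_of_not_linearIndependent
    {A : Type*} [AddCommGroup A] [Module.Free ℤ A] [Module.Finite ℤ A]
    (n : ℕ) (S : Fin n → AddSubgroup A)
    (hdep : ∃ a : Fin n → A, (∀ i, a i ∈ S i) ∧ (∑ i, a i) = 0 ∧ ∃ i, a i ≠ 0) :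
    ∀ Sd : Fin n → AddSubgroup A,
      (∀ i, Sd i ≤ S i ∧ ((Sd i).addSubgroupOf (S i)).FiniteIndex) →
      ∃ S' : Fin n → AddSubgroup A,
        (∀ i, S' i ≤ Sd i ∧ ((S' i).addSubgroupOf (S i)).FiniteIndex) ∧
        ¬ ∃ B : AddSubgroup A, B.FiniteIndex ∧ ∀ i, S i ⊓ B = S' i := by
  obtain ⟨a, ha, hsum, j, hj⟩ := hdep
  intro Sd hSd
  haveI : ∀ i, ((Sd i).addSubgroupOf (S i)).FiniteIndex := fun i => (hSd i).2
  -- the common multiple m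
  set m : ℕ := ∏ i, ((Sd i).addSubgroupOf (S i)).index with hm_def
  have hm0 : m ≠ 0 := Finset.prod_ne_zero_iff.2 fun i _ =>
    ((hSd i).2).index_ne_zero
  -- m • a i ∈ Sd i for all i
  have hmem : ∀ i, m • a i ∈ Sd i := by
    intro i
    obtain ⟨k, hk⟩ := Finset.dvd_prod_of_mem
      (fun i => ((Sd i).addSubgroupOf (S i)).index) (Finset.mem_univ i)
    have h1 : ((Sd i).addSubgroupOf (S i)).index • (⟨a i, ha i⟩ : S i) ∈
        (Sd i).addSubgroupOf (S i) :=
      AddSubgroup.nsmul_index_mem _ _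
    have h2 : m • (⟨a i, ha i⟩ : S i) ∈ (Sd i).addSubgroupOf (S i) := by
      rw [← hm_def] at hk
      rw [hk, mul_comm, mul_smul]
      exact AddSubgroup.nsmul_mem _ h1 k
    simpa [AddSubgroup.mem_addSubgroupOf] using h2
  -- x := m • a j is a nonzero element
  set x : A := m • a j with hx_def
  have hx0 : x ≠ 0 := by
    have : (m : ℤ) • a j ≠ 0 :=
      smul_ne_zero (by exact_mod_cast hm0) hj
    simpa [hx_def] using this
  -- find a coordinate functional not vanishing on x
  set b := Module.Free.chooseBasis ℤ A with hb
  have hrepr : b.repr x ≠ 0 := fun h => hx0 (by simpa using congrArg b.repr.symm h)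
  obtain ⟨i0, hi0⟩ := Finsupp.ne_iff.1 hrepr
  simp only [Finsupp.coe_zero, Pi.zero_apply] at hi0
  set c : ℤ := b.repr x i0 with hc_def
  have hc0 : c ≠ 0 := hi0
  set N : ℕ := 2 * c.natAbs with hN_def
  haveI : NeZero N := ⟨by simp [hN_def, Int.natAbs_ne_zero.2 hc0]⟩
  -- the finite-index kernel K
  set f : A →+ ZMod N :=
    (Int.castAddHom (ZMod N)).comp (b.coord i0).toAddMonoidHom with hf_def
  set K : AddSubgroup A := f.ker with hK_def
  haveI : K.FiniteIndex := AddSubgroup.finiteIndex_ker f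
  have hxK : x ∉ K := by
    intro hxK
    have h0 : ((c : ℤ) : ZMod N) = 0 := by
      have h1 : f x = 0 := hxK
      simpa [hf_def, hc_def, Module.Basis.coord_apply] using h1
    have hdvd : (N : ℤ) ∣ c := (ZMod.intCast_zmod_eq_zero_iff_dvd c N).1 h0
    have hdvd' : N ∣ c.natAbs := by
      have := Int.natAbs_dvd_natAbs.2 hdvd
      simpa using this
    have := Nat.le_of_dvd (Nat.pos_of_ne_zero (Int.natAbs_ne_zero.2 hc0)) hdvd'
    omega
  -- define S'
  refine ⟨fun i => if i = j then Sd j ⊓ K else Sd i, ?_, ?_⟩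
  · intro i
    beta_reduce
    by_cases h : i = j
    · subst h
      rw [if_pos rfl]
      constructor
      · exact inf_le_left
      · have heq : (Sd i ⊓ K).addSubgroupOf (S i) =
            (Sd i).addSubgroupOf (S i) ⊓ K.addSubgroupOf (S i) :=
          AddSubgroup.comap_inf (Sd i) K (S i).subtype
        rw [heq]
        infer_instance
    · rw [if_neg h]
      exact ⟨le_refl _, (hSd i).2⟩
  · rintro ⟨B, hB, hIB⟩
    -- all m • a i with i ≠ j lie in B
    have hB' : ∀ i, i ≠ j → m • a i ∈ B := by
      intro i hij
      have h2 : S i ⊓ B = Sd i := by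
        have := hIB i
        simpa [if_neg hij] using this
      have : m • a i ∈ S i ⊓ B := by
        rw [h2]; exact hmem i
      exact this.2
    -- hence x ∈ B
    have hsum' : ∑ i, m • a i = (0 : A) := by
      rw [← Finset.smul_sum, hsum, smul_zero]
    have hxB : x ∈ B := by
      have hsplit : m • a j + ∑ i ∈ Finset.univ.erase j, m • a i = ∑ i, m • a i :=
        Finset.add_sum_erase Finset.univ (fun i => m • a i) (Finset.mem_univ j)
      have hxeq : x = -∑ i ∈ Finset.univ.erase j, m • a i := by
        rw [hx_def, eq_neg_iff_add_eq_zero, hsplit, hsum']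
      rw [hxeq]
      exact AddSubgroup.neg_mem _ (AddSubgroup.sum_mem _ fun i hi =>
        hB' i (Finset.ne_of_mem_erase hi))
    have hxS : x ∈ S j := AddSubgroup.nsmul_mem _ (ha j) m
    have hmem2 : x ∈ S j ⊓ B := ⟨hxS, hxB⟩
    have h3 : S j ⊓ B = Sd j ⊓ K := by
      have := hIB j
      simpa using this
    rw [h3] at hmem2
    exact hxK hmem2.2
end

section
/- Let G be a group and g₁, …, gₙ elements of infinite order. Then G commands the set {g₁, …, gₙ} (in the sense of element-commanding, with some N > 0 and prescribed orders Nrᵢ in finite quotients) if and only if G commands the collection of cyclic subgroups (⟨g₁⟩, …, ⟨gₙ⟩) (in the sense of subgroup-commanding). -/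
/-- `G` commands the elements `g₁, …, gₙ`: there is `N > 0` such that for all positive
`r₁, …, rₙ` there is a homomorphism to a finite group (equivalently a finite-index normal
subgroup `H`, its kernel) in which the image of `gᵢ` has order exactly `N·rᵢ`
(expressed as `gᵢ^k ∈ H ↔ N·rᵢ ∣ k`). -/
def CommandsElts {G : Type*} [Group G] {n : ℕ} (g : Fin n → G) : Prop :=
  ∃ N : ℕ, 0 < N ∧ ∀ r : Fin n → ℕ, (∀ i, 0 < r i) →
    ∃ H : Subgroup G, H.Normal ∧ H.FiniteIndex ∧
      ∀ i, ∀ k : ℕ, (g i) ^ k ∈ H ↔ (N * r i) ∣ k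

/-- `G` commands the subgroups `P₁, …, Pₙ`: there are finite-index subgroups `Ṗᵢ ≤ Pᵢ` such
that for any finite-index subgroups `P′ᵢ ≤ Ṗᵢ` normal in `Pᵢ` there is a finite-index
normal subgroup `G′ ⊴ G` with `Pᵢ ∩ G′ = P′ᵢ`. -/
def CommandsSubgroups {G : Type*} [Group G] {n : ℕ} (P : Fin n → Subgroup G) : Prop :=
  ∃ Pd : Fin n → Subgroup G,
    (∀ i, Pd i ≤ P i ∧ ((Pd i).subgroupOf (P i)).FiniteIndex) ∧
    ∀ P' : Fin n → Subgroup G,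
      (∀ i, P' i ≤ Pd i ∧ ((P' i).subgroupOf (P i)).FiniteIndex ∧
        ((P' i).subgroupOf (P i)).Normal) →
      ∃ G' : Subgroup G, G'.Normal ∧ G'.FiniteIndex ∧ ∀ i, P i ⊓ G' = P' i

section Aux

variable {G : Type*} [Group G]

lemma aux_mem_zpowers_pow_iff {g : G} (hg : ¬ IsOfFinOrder g) (m : ℕ) (k : ℤ) :
    g ^ k ∈ Subgroup.zpowers (g ^ m) ↔ (m : ℤ) ∣ k := by
  rw [Subgroup.mem_zpowers_iff]
  constructor
  · rintro ⟨l, hl⟩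
    rw [← zpow_natCast g m, ← zpow_mul] at hl
    exact ⟨l, ((injective_zpow_iff_not_isOfFinOrder.2 hg) hl).symm⟩
  · rintro ⟨l, rfl⟩
    exact ⟨l, by rw [← zpow_natCast g m, ← zpow_mul]⟩

lemma aux_fi {g : G} (hg : ¬ IsOfFinOrder g) {m : ℕ} (hm : 0 < m) :
    ((Subgroup.zpowers (g ^ m)).subgroupOf (Subgroup.zpowers g)).FiniteIndex := by
  set H := (Subgroup.zpowers (g ^ m)).subgroupOf (Subgroup.zpowers g) with hH
  have : Finite (↥(Subgroup.zpowers g) ⧸ H) := by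
    have hsurj : Function.Surjective
        (fun j : Fin m => (QuotientGroup.mk (⟨g ^ ((j : ℕ) : ℤ),
          zpow_mem (Subgroup.mem_zpowers g) _⟩ : ↥(Subgroup.zpowers g)) :
          ↥(Subgroup.zpowers g) ⧸ H)) := by
      intro q
      induction q using QuotientGroup.induction_on with
      | H x =>
        obtain ⟨k, hk⟩ := Subgroup.mem_zpowers_iff.1 x.2
        have hmz : (0:ℤ) < (m:ℤ) := by exact_mod_cast hm
        have h0 : 0 ≤ k % (m:ℤ) := Int.emod_nonneg k hmz.ne'
        have hlt : k % (m:ℤ) < (m:ℤ) := Int.emod_lt_of_pos k hmz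
        refine ⟨⟨(k % (m:ℤ)).toNat, by omega⟩, ?_⟩
        rw [QuotientGroup.eq]
        rw [Subgroup.mem_subgroupOf]
        have hco : ((((⟨g ^ (((k % (m:ℤ)).toNat : ℕ) : ℤ), zpow_mem (Subgroup.mem_zpowers g) _⟩ :
            ↥(Subgroup.zpowers g)))⁻¹ * x : ↥(Subgroup.zpowers g)) : G)
            = g ^ (k - ((k % (m:ℤ)).toNat : ℤ)) := by
          push_cast
          rw [← hk, ← zpow_neg, ← zpow_add, neg_add_eq_sub]
        rw [hco, aux_mem_zpowers_pow_iff hg]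
        rw [Int.toNat_of_nonneg h0]
        exact Int.dvd_self_sub_of_emod_eq rfl
    exact Finite.of_surjective _ hsurj
  exact Subgroup.finiteIndex_of_finite_quotient (H := H)

lemma aux_char {g : G} (hg : ¬ IsOfFinOrder g) (H : Subgroup G)
    (hfi : (H.subgroupOf (Subgroup.zpowers g)).FiniteIndex) :
    ∃ m : ℕ, 0 < m ∧ ∀ k : ℤ, g ^ k ∈ H ↔ (m : ℤ) ∣ k := by
  have hzinj : Function.Injective fun k : ℤ => g ^ k :=
    injective_zpow_iff_not_isOfFinOrder.2 hg
  set K : AddSubgroup ℤ :=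
    { carrier := {k | g ^ k ∈ H}
      zero_mem' := by simp only [Set.mem_setOf_eq, zpow_zero]; exact one_mem H
      add_mem' := fun ha hb => by simpa [zpow_add] using H.mul_mem ha hb
      neg_mem' := fun ha => by simpa [zpow_neg] using H.inv_mem ha } with hK
  obtain ⟨a, hKa⟩ := Int.subgroup_cyclic K
  have hmem : ∀ k : ℤ, g ^ k ∈ H ↔ a ∣ k := by
    intro k
    have h1 : k ∈ K ↔ k ∈ AddSubgroup.closure {a} := by rw [hKa]
    rw [AddSubgroup.mem_closure_singleton] at h1
    have h2 : k ∈ K ↔ g ^ k ∈ H := Iff.rfl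
    rw [← h2, h1]
    constructor
    · rintro ⟨c, rfl⟩; exact ⟨c, by rw [smul_eq_mul, mul_comm]⟩
    · rintro ⟨c, rfl⟩; exact ⟨c, by rw [smul_eq_mul, mul_comm]⟩
  have ha : a ≠ 0 := by
    intro ha0
    subst ha0
    have hbot : H.subgroupOf (Subgroup.zpowers g) = ⊥ := by
      rw [eq_bot_iff]
      intro x hx
      obtain ⟨k, hk⟩ := Subgroup.mem_zpowers_iff.1 x.2
      rw [Subgroup.mem_subgroupOf, ← hk] at hx
      have : k = 0 := by simpa using (hmem k).1 hx
      subst this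
      have : (x : G) = 1 := by rw [← hk]; simp
      exact Subgroup.mem_bot.2 (Subtype.ext (by simpa using this))
    have hinfz : Infinite ↥(Subgroup.zpowers g) :=
      Infinite.of_injective (fun k : ℤ => (⟨g ^ k, zpow_mem (Subgroup.mem_zpowers g) k⟩ :
        ↥(Subgroup.zpowers g))) (fun a b h => hzinj (congrArg Subtype.val h))
    have := hfi.index_ne_zero
    rw [hbot, Subgroup.index_bot] at this
    exact this (Nat.card_eq_zero_of_infinite)
  refine ⟨a.natAbs, Int.natAbs_pos.2 ha, fun k => ?_⟩
  rw [hmem k, Int.natAbs_dvd]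

end Aux

/-- For elements of infinite order, commanding the elements is equivalent to commanding
the cyclic subgroups they generate. -/

theorem commandsElts_iff_commands_zpowers {G : Type*} [Group G] {n : ℕ}
    (g : Fin n → G) (hinf : ∀ i, ¬ IsOfFinOrder (g i)) :
    CommandsElts g ↔ CommandsSubgroups (fun i => Subgroup.zpowers (g i)) := by
  constructor
  · rintro ⟨N, hN, hmain⟩
    refine ⟨fun i => Subgroup.zpowers (g i ^ N), fun i =>
      ⟨Subgroup.zpowers_le.2 (pow_mem (Subgroup.mem_zpowers _) N), aux_fi (hinf i) hN⟩, ?_⟩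
    intro P' hP'
    have h1 : ∀ i, ∃ m : ℕ, 0 < m ∧ ∀ k : ℤ, (g i) ^ k ∈ P' i ↔ (m : ℤ) ∣ k :=
      fun i => aux_char (hinf i) (P' i) (hP' i).2.1
    choose m hm hmem using h1
    have hdvd : ∀ i, N ∣ m i := by
      intro i
      have h2 : (g i) ^ ((m i : ℕ) : ℤ) ∈ Subgroup.zpowers (g i ^ N) :=
        (hP' i).1 ((hmem i (m i)).2 dvd_rfl)
      exact_mod_cast (aux_mem_zpowers_pow_iff (hinf i) N (m i)).1 h2
    set r : Fin n → ℕ := fun i => m i / N with hrdef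
    have hr : ∀ i, 0 < r i := fun i => Nat.div_pos (Nat.le_of_dvd (hm i) (hdvd i)) hN
    have hmr : ∀ i, N * r i = m i := fun i => Nat.mul_div_cancel' (hdvd i)
    obtain ⟨H, hHn, hHfi, hH⟩ := hmain r hr
    refine ⟨H, hHn, hHfi, fun i => ?_⟩
    have hHz : ∀ k : ℤ, (g i) ^ k ∈ H ↔ ((m i : ℕ) : ℤ) ∣ k := by
      intro k
      have h2 : (g i) ^ k ∈ H ↔ (g i) ^ (k.natAbs) ∈ H := by
        rcases Int.natAbs_eq k with h | h
        · conv_lhs => rw [h]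
          rw [zpow_natCast]
        · conv_lhs => rw [h]
          rw [zpow_neg, zpow_natCast, inv_mem_iff]
      rw [h2, hH i, hmr i, ← Int.natCast_dvd_natCast, Int.dvd_natAbs]
    have hle : P' i ≤ Subgroup.zpowers (g i) :=
      (hP' i).1.trans (Subgroup.zpowers_le.2 (pow_mem (Subgroup.mem_zpowers _) N))
    apply le_antisymm
    · intro x hx
      rw [Subgroup.mem_inf] at hx
      obtain ⟨k, rfl⟩ := Subgroup.mem_zpowers_iff.1 hx.1
      exact (hmem i k).2 ((hHz k).1 hx.2)
    · intro x hx
      rw [Subgroup.mem_inf]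
      obtain ⟨k, rfl⟩ := Subgroup.mem_zpowers_iff.1 (hle hx)
      exact ⟨zpow_mem (Subgroup.mem_zpowers _) k, (hHz k).2 ((hmem i k).1 hx)⟩
  · rintro ⟨Pd, hPd, hmain⟩
    have h1 : ∀ i, ∃ M : ℕ, 0 < M ∧ ∀ k : ℤ, (g i) ^ k ∈ Pd i ↔ (M : ℤ) ∣ k :=
      fun i => aux_char (hinf i) (Pd i) (hPd i).2
    choose M hM hMc using h1
    refine ⟨∏ i, M i, Finset.prod_pos (fun i _ => hM i), ?_⟩
    intro r hr
    set N : ℕ := ∏ i, M i with hNdef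
    have hN : 0 < N := Finset.prod_pos fun i _ => hM i
    set P' : Fin n → Subgroup G := fun i => Subgroup.zpowers (g i ^ (N * r i)) with hP'def
    have hle : ∀ i, P' i ≤ Pd i := by
      intro i x hx
      obtain ⟨l, rfl⟩ := Subgroup.mem_zpowers_iff.1 hx
      rw [← zpow_natCast (g i) (N * r i), ← zpow_mul]
      refine (hMc i _).2 ?_
      have hMN : (M i : ℤ) ∣ ((N * r i : ℕ) : ℤ) :=
        Int.natCast_dvd_natCast.2 ((Finset.dvd_prod_of_mem M (Finset.mem_univ i)).mul_right _)
      exact hMN.mul_right l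
    have hnorm : ∀ i, ((P' i).subgroupOf (Subgroup.zpowers (g i))).Normal := by
      intro i
      constructor
      intro x hx y
      obtain ⟨a, ha⟩ := Subgroup.mem_zpowers_iff.1 x.2
      obtain ⟨b, hb⟩ := Subgroup.mem_zpowers_iff.1 y.2
      have hcomm : (y : G) * (x : G) * (y : G)⁻¹ = (x : G) := by
        rw [← ha, ← hb, ← zpow_neg, ← zpow_add, ← zpow_add]
        ring_nf
      rw [Subgroup.mem_subgroupOf] at hx ⊢
      have hco : ((y * x * y⁻¹ : ↥(Subgroup.zpowers (g i))) : G) = (x : G) := by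
        push_cast
        exact hcomm
      rw [hco]
      exact hx
    obtain ⟨G', hG'n, hG'fi, hG'⟩ := hmain P'
      (fun i => ⟨hle i, aux_fi (hinf i) (Nat.mul_pos hN (hr i)), hnorm i⟩)
    refine ⟨G', hG'n, hG'fi, ?_⟩
    intro i k
    have hG'i : Subgroup.zpowers (g i) ⊓ G' = P' i := hG' i
    have h2 : (g i) ^ k ∈ G' ↔ (g i) ^ k ∈ P' i := by
      constructor
      · intro h
        have : (g i) ^ k ∈ Subgroup.zpowers (g i) ⊓ G' :=
          Subgroup.mem_inf.2 ⟨pow_mem (Subgroup.mem_zpowers _) k, h⟩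
        rwa [hG'i] at this
      · intro h
        have h3 : P' i ≤ G' := by rw [← hG'i]; exact inf_le_right
        exact h3 h
    rw [h2, hP'def]
    rw [← zpow_natCast (g i) k, aux_mem_zpowers_pow_iff (hinf i), Int.natCast_dvd_natCast]
end

section
/- Let G be a residually finite group that commands a collection of subgroups (P₁, …, Pₙ). If Pᵢ = Pⱼ for some i ≠ j, then Pᵢ is finite. -/
/-- A group is residually finite if every nontrivial element survives in some finite quotient. -/
def ResiduallyFinite (G : Type*) [Group G] : Prop :=
  ∀ g : G, g ≠ 1 → ∃ N : Subgroup G, N.Normal ∧ N.FiniteIndex ∧ g ∉ N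

lemma subgroupOf_map_self {G : Type*} [Group G] {K : Subgroup G} (L : Subgroup K) :
    (L.map K.subtype).subgroupOf K = L :=
  Subgroup.comap_map_eq_self_of_injective K.subtype_injective L

lemma fi_of_eq {G : Type*} [Group G] {A B : Subgroup G} (h : A = B) (L : Subgroup A)
    [hL : L.FiniteIndex] : ((L.map A.subtype).subgroupOf B).FiniteIndex := by
  subst h; rw [subgroupOf_map_self]; exact hL

lemma normal_of_eq {G : Type*} [Group G] {A B : Subgroup G} (h : A = B) (L : Subgroup A)
    [hL : L.Normal] : ((L.map A.subtype).subgroupOf B).Normal := by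
  subst h; rw [subgroupOf_map_self]; exact hL

/-- If a residually finite group `G` commands `(P₁, …, Pₙ)` and `Pᵢ = Pⱼ` for `i ≠ j`,
then `Pᵢ` is finite. -/
theorem commands_duplicate_finite {G : Type*} [Group G] {n : ℕ}
    (hRF : ResiduallyFinite G) (P : Fin n → Subgroup G) (h : CommandsSubgroups P)
    (i j : Fin n) (hij : i ≠ j) (hP : P i = P j) :
    (P i : Set G).Finite := by
  by_contra hfin
  have hinf : Infinite (P i) := Set.Infinite.to_subtype hfin
  obtain ⟨Pd, hPd, hcmd⟩ := h
  have hfi : ∀ k, ((Pd k).subgroupOf (P k)).FiniteIndex := fun k => (hPd k).2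
  have hfij : ((Pd j).subgroupOf (P i)).FiniteIndex := by rw [hP]; exact hfi j
  haveI : ((Pd i).subgroupOf (P i)).FiniteIndex := hfi i
  haveI : ((Pd j).subgroupOf (P i)).FiniteIndex := hfij
  set Ncore : Subgroup (P i) :=
    ((Pd i).subgroupOf (P i) ⊓ (Pd j).subgroupOf (P i)).normalCore with hNcore
  haveI : Ncore.FiniteIndex := Subgroup.finiteIndex_normalCore _
  haveI : Ncore.Normal := Subgroup.normalCore_normal _
  -- Ncore is nontrivial
  have hx : ∃ x : P i, x ∈ Ncore ∧ x ≠ 1 := by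
    by_contra hc
    push_neg at hc
    have hbot : Ncore = ⊥ := by
      ext x; simp only [Subgroup.mem_bot]
      exact ⟨fun hx => hc x hx, fun hx => hx ▸ Ncore.one_mem⟩
    have := Subgroup.FiniteIndex.index_ne_zero (H := Ncore)
    rw [hbot, Subgroup.index_bot, Nat.card_eq_zero_of_infinite] at this
    exact this rfl
  obtain ⟨x, hxN, hx1⟩ := hx
  have hxg : (x : G) ≠ 1 := fun hg => hx1 (Subtype.ext hg)
  obtain ⟨K, hKn, hKfi, hxK⟩ := hRF (x : G) hxg
  haveI := hKn
  haveI := hKfi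
  set N' : Subgroup (P i) := Ncore ⊓ K.subgroupOf (P i) with hN'
  haveI : (K.subgroupOf (P i)).FiniteIndex := Subgroup.instFiniteIndex_subgroupOf K (P i)
  haveI : N'.FiniteIndex := inferInstance
  haveI : N'.Normal := Subgroup.normal_inf_normal _ _
  set Qcore : ∀ k : Fin n, Subgroup (P k) := fun k => ((Pd k).subgroupOf (P k)).normalCore
    with hQ
  classical
  set P' : Fin n → Subgroup G := fun k =>
    if k = i then Ncore.map (P i).subtype
    else if k = j then N'.map (P i).subtype
    else (Qcore k).map (P k).subtype with hP'
  have hNle : Ncore ≤ (Pd i).subgroupOf (P i) ⊓ (Pd j).subgroupOf (P i) :=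
    Subgroup.normalCore_le _
  have key : ∀ k, P' k ≤ Pd k ∧ ((P' k).subgroupOf (P k)).FiniteIndex ∧
      ((P' k).subgroupOf (P k)).Normal := by
    intro k
    by_cases hk : k = i
    · have e : P' k = Ncore.map (P i).subtype := by simp [hP', hk]
      rw [e, hk]
      refine ⟨?_, fi_of_eq rfl Ncore, normal_of_eq rfl Ncore⟩
      intro g hg
      obtain ⟨y, hy, rfl⟩ := hg
      exact (hNle hy).1
    · by_cases hk' : k = j
      · have e : P' k = N'.map (P i).subtype := by simp [hP', hk', Ne.symm hij]
        rw [e, hk']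
        refine ⟨?_, fi_of_eq hP N', normal_of_eq hP N'⟩
        intro g hg
        obtain ⟨y, hy, rfl⟩ := hg
        exact (hNle hy.1).2
      · have e : P' k = (Qcore k).map (P k).subtype := by simp [hP', hk, hk']
        rw [e]
        haveI := hfi k
        haveI : (Qcore k).FiniteIndex := Subgroup.finiteIndex_normalCore _
        haveI : (Qcore k).Normal := Subgroup.normalCore_normal _
        refine ⟨?_, fi_of_eq rfl (Qcore k), normal_of_eq rfl (Qcore k)⟩
        intro g hg
        obtain ⟨y, hy, rfl⟩ := hg
        exact (Subgroup.normalCore_le ((Pd k).subgroupOf (P k))) hy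
  obtain ⟨G', _, _, hG'⟩ := hcmd P' key
  have hPi' : P' i = Ncore.map (P i).subtype := by simp [hP']
  have hPj' : P' j = N'.map (P i).subtype := by simp [hP', Ne.symm hij]
  have hi : P i ⊓ G' = Ncore.map (P i).subtype := (hG' i).trans hPi'
  have hj : P j ⊓ G' = N'.map (P i).subtype := (hG' j).trans hPj'
  have hxG' : (x : G) ∈ G' := by
    have : (x : G) ∈ P i ⊓ G' := by
      rw [hi]; exact ⟨x, hxN, rfl⟩
    exact this.2
  have hxPj : (x : G) ∈ P j := hP ▸ x.2
  have hxmem : (x : G) ∈ N'.map (P i).subtype := by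
    rw [← hj]; exact ⟨hxPj, hxG'⟩
  obtain ⟨y, hy, hyx⟩ := hxmem
  have hyx' : y = x := Subtype.ext hyx
  subst hyx'
  exact hxK hy.2
end

section
/- Let A be a finitely generated free abelian group with linearly independent subgroups A₁, …, Aₙ, and let A′ᵢ ≤ Aᵢ be finite-index subgroups. Set B = A′₁ + ⋯ + A′ₙ. Then there exists a subgroup C ≤ A with C ∩ B = 0 such that A′ := B + C has finite index in A, and moreover Aᵢ ∩ A′ = A′ᵢ for each i, and (A′ + Aⱼ) ∩ (A′ + Aₖ) = A′ for all j ≠ k. -/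
/-- Every element of a finite supremum of additive subgroups is a finite sum. -/
lemma mem_iSup_fin_exists_sum {A : Type*} [AddCommGroup A] {n : ℕ}
    (S' : Fin n → AddSubgroup A) {x : A} (hx : x ∈ ⨆ i, S' i) :
    ∃ a : Fin n → A, (∀ i, a i ∈ S' i) ∧ ∑ i, a i = x := by
  have hx' : x ∈ ⨆ i, AddSubgroup.toIntSubmodule (S' i) := by
    have : AddSubgroup.toIntSubmodule (⨆ i, S' i) = ⨆ i, AddSubgroup.toIntSubmodule (S' i) :=
      (AddSubgroup.toIntSubmodule : AddSubgroup A ≃o Submodule ℤ A).map_iSup S'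
    rw [← this]; exact hx
  rw [Submodule.mem_iSup_iff_exists_finsupp] at hx'
  obtain ⟨f, hf, hsum⟩ := hx'
  refine ⟨fun i => f i, fun i => hf i, ?_⟩
  rw [← hsum, Finsupp.sum_fintype]
  intro i; rfl

/-- Strong commanding for free abelian groups: given linearly independent subgroups
`S₁, …, Sₙ` of a finitely generated free abelian group `A` and finite-index subgroups
`S′ᵢ ≤ Sᵢ`, letting `B = S′₁ + ⋯ + S′ₙ`, there is a subgroup `C` with `C ∩ B = 0` such
that `A′ := B + C` has finite index in `A`, `Sᵢ ∩ A′ = S′ᵢ` for all `i`, and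
`(A′ + Sⱼ) ∩ (A′ + Sₖ) = A′` for all `j ≠ k`. -/
theorem freeAbelian_strong_commanding
    {A : Type*} [AddCommGroup A] [Module.Free ℤ A] [Module.Finite ℤ A]
    (n : ℕ) (S : Fin n → AddSubgroup A)
    (hind : ∀ a : Fin n → A, (∀ i, a i ∈ S i) → (∑ i, a i) = 0 → ∀ i, a i = 0)
    (S' : Fin n → AddSubgroup A) (hle : ∀ i, S' i ≤ S i)
    (hfin : ∀ i, ((S' i).addSubgroupOf (S i)).FiniteIndex) :
    ∃ C : AddSubgroup A, C ⊓ (⨆ i, S' i) = ⊥ ∧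
      ((⨆ i, S' i) ⊔ C).FiniteIndex ∧
      (∀ i, S i ⊓ ((⨆ i, S' i) ⊔ C) = S' i) ∧
      ∀ j k, j ≠ k →
        (((⨆ i, S' i) ⊔ C) ⊔ S j) ⊓ (((⨆ i, S' i) ⊔ C) ⊔ S k) = (⨆ i, S' i) ⊔ C := by
  classical
  set B : AddSubgroup A := ⨆ i, S' i with hB
  set Bm : Submodule ℤ A := AddSubgroup.toIntSubmodule B with hBm
  have hmemBm : ∀ x : A, x ∈ Bm ↔ x ∈ B := fun x => Iff.rfl
  set T : Submodule ℤ (A ⧸ Bm) := Submodule.torsion ℤ (A ⧸ Bm) with hT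
  haveI : Module.Free ℤ ((A ⧸ Bm) ⧸ T) := Module.free_of_finite_type_torsion_free'
  set φ : A →ₗ[ℤ] (A ⧸ Bm) ⧸ T := T.mkQ.comp Bm.mkQ with hφdef
  have hφsurj : Function.Surjective φ := T.mkQ_surjective.comp Bm.mkQ_surjective
  obtain ⟨σ, hσ⟩ := Module.projective_lifting_property φ LinearMap.id hφsurj
  have hσφ : ∀ y, φ (σ y) = y := fun y => by
    have := LinearMap.congr_fun hσ y
    simpa using this
  set C : AddSubgroup A := (LinearMap.range σ).toAddSubgroup with hC
  -- φ vanishes on B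
  have hφB : ∀ x ∈ B, φ x = 0 := by
    intro x hx
    have : Bm.mkQ x = 0 := (Submodule.Quotient.mk_eq_zero Bm).2 hx
    simp [hφdef, this]
  -- φ vanishes on elements with a multiple in B
  have hφtor : ∀ x : A, (∃ m : ℕ, 0 < m ∧ m • x ∈ B) → φ x = 0 := by
    intro x ⟨m, hm, hmx⟩
    have h1 : (m : ℤ) • Bm.mkQ x = 0 := by
      rw [← map_zsmul]
      exact (Submodule.Quotient.mk_eq_zero Bm).2 (by simpa using (hmemBm (m • x)).2 hmx)
    have h2 : Bm.mkQ x ∈ T := by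
      refine ⟨⟨(m : ℤ), mem_nonZeroDivisors_of_ne_zero (by exact_mod_cast hm.ne')⟩, ?_⟩
      simpa using h1
    simpa [hφdef] using (Submodule.Quotient.mk_eq_zero T).2 h2
  -- φ vanishes on each S i
  have hφS : ∀ i, ∀ s ∈ S i, φ s = 0 := by
    intro i s hs
    haveI := hfin i
    refine hφtor s ⟨((S' i).addSubgroupOf (S i)).index, Nat.pos_of_ne_zero
      (AddSubgroup.FiniteIndex.index_ne_zero), ?_⟩
    have h := AddSubgroup.nsmul_index_mem ((S' i).addSubgroupOf (S i)) ⟨s, hs⟩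
    rw [AddSubgroup.mem_addSubgroupOf] at h
    have hsm : ((S' i).addSubgroupOf (S i)).index • s ∈ S' i := by
      simpa using h
    exact le_iSup S' i hsm
  -- characterization of membership in B ⊔ C
  have hmemA' : ∀ x : A, x ∈ B ⊔ C ↔ x - σ (φ x) ∈ B := by
    intro x
    constructor
    · intro hx
      obtain ⟨b, hb, c, hc, rfl⟩ := (AddSubgroup.mem_sup).1 hx
      obtain ⟨y, rfl⟩ := hc
      have : φ (b + σ y) = y := by rw [map_add, hφB b hb, hσφ, zero_add]
      rw [this]; simpa using hb
    · intro hx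
      have : x = (x - σ (φ x)) + σ (φ x) := by abel
      rw [this]
      exact AddSubgroup.add_mem_sup hx ⟨φ x, rfl⟩
  -- C ⊓ B = ⊥
  have hCB : C ⊓ B = ⊥ := by
    rw [eq_bot_iff]
    rintro x ⟨⟨y, rfl⟩, hxB⟩
    have : y = 0 := by rw [← hσφ y, hφB _ hxB]
    simp [this]
  -- B ∩ S i ≤ S' i by independence
  have hBS : ∀ i, ∀ x ∈ B, x ∈ S i → x ∈ S' i := by
    intro i x hxB hxS
    obtain ⟨a, ha, hsum⟩ := mem_iSup_fin_exists_sum S' hxB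
    set b : Fin n → A := fun j => a j + (if j = i then -x else 0) with hb
    have hbS : ∀ j, b j ∈ S j := by
      intro j
      by_cases h : j = i
      · subst h; simpa [hb] using (S j).add_mem (hle j (ha j)) ((S j).neg_mem hxS)
      · simpa [hb, h] using hle j (ha j)
    have hbsum : ∑ j, b j = 0 := by
      rw [hb]
      rw [Finset.sum_add_distrib, hsum, Finset.sum_ite_eq' Finset.univ i fun _ => -x]
      simp
    have := hind b hbS hbsum i
    have : a i - x = 0 := by simpa [hb, sub_eq_add_neg] using this
    have hax : x = a i := (sub_eq_zero.mp this).symm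
    rw [hax]; exact ha i
  -- S i ⊓ (B ⊔ C) = S' i
  have hSint : ∀ i, S i ⊓ (B ⊔ C) = S' i := by
    intro i
    apply le_antisymm
    · rintro x ⟨hxS, hxA'⟩
      have hφx : φ x = 0 := hφS i x hxS
      have hxB : x ∈ B := by
        have := (hmemA' x).1 hxA'
        simpa [hφx] using this
      exact hBS i x hxB hxS
    · intro x hx
      exact ⟨hle i hx, AddSubgroup.mem_sup_left (le_iSup S' i hx)⟩
  -- finite index
  have hTfin : Finite T := by
    haveI : Module.Finite ℤ (A ⧸ Bm) := Module.Finite.quotient ℤ Bm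
    haveI : Module.Finite ℤ T := by
      rw [Module.Finite.iff_fg]
      exact IsNoetherian.noetherian T
    exact Module.finite_of_fg_torsion T (Submodule.torsion_isTorsion (R := ℤ) (M := A ⧸ Bm))
  have hfinidx : (B ⊔ C).FiniteIndex := by
    set g : A →+ T :=
      { toFun := fun x => ⟨Bm.mkQ (x - σ (φ x)), by
          have : φ (x - σ (φ x)) = 0 := by rw [map_sub, hσφ, sub_self]
          have h2 : T.mkQ (Bm.mkQ (x - σ (φ x))) = 0 := this
          exact (Submodule.Quotient.mk_eq_zero T).1 h2⟩
        map_zero' := by ext; simp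
        map_add' := fun x y => by
          ext
          show Bm.mkQ (x + y - σ (φ (x + y))) =
            Bm.mkQ (x - σ (φ x)) + Bm.mkQ (y - σ (φ y))
          rw [← map_add Bm.mkQ]
          congr 1
          rw [map_add φ, map_add σ]
          abel } with hg
    have hker : g.ker = B ⊔ C := by
      ext x
      rw [AddMonoidHom.mem_ker, hmemA']
      constructor
      · intro h
        have : Bm.mkQ (x - σ (φ x)) = 0 := congrArg Subtype.val h
        exact (Submodule.Quotient.mk_eq_zero Bm).1 this
      · intro h
        ext
        exact (Submodule.Quotient.mk_eq_zero Bm).2 h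
    haveI : Finite (A ⧸ (B ⊔ C)) := by
      rw [← hker]
      exact Finite.of_injective _ (QuotientAddGroup.kerLift_injective g)
    exact AddSubgroup.finiteIndex_of_finite_quotient
  -- last condition
  refine ⟨C, hCB, hfinidx, hSint, ?_⟩
  intro j k hjk
  apply le_antisymm
  · rintro x ⟨hxj, hxk⟩
    obtain ⟨a, ha, s, hs, hxs⟩ := (AddSubgroup.mem_sup).1 hxj
    obtain ⟨a', ha', t, ht, hxt⟩ := (AddSubgroup.mem_sup).1 hxk
    have hst : s - t ∈ B ⊔ C := by
      have : s - t = a' - a := by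
        have h := hxs.trans hxt.symm
        rw [sub_eq_sub_iff_add_eq_add, add_comm s a]
        exact h
      rw [this]
      exact AddSubgroup.sub_mem _ ha' ha
    have hstB : s - t ∈ B := by
      have hφst : φ (s - t) = 0 := by
        rw [map_sub, hφS j s hs, hφS k t ht, sub_zero]
      have := (hmemA' (s - t)).1 hst
      simpa [hφst] using this
    obtain ⟨c, hc, hcsum⟩ := mem_iSup_fin_exists_sum S' hstB
    set b : Fin n → A := fun i => c i + (if i = j then -s else 0) + (if i = k then t else 0)
      with hbdef
    have hbS : ∀ i, b i ∈ S i := by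
      intro i
      by_cases hij : i = j
      · subst hij
        simpa [hbdef, hjk] using (S i).add_mem (hle i (hc i)) ((S i).neg_mem hs)
      · by_cases hik : i = k
        · subst hik
          simpa [hbdef, hij] using (S i).add_mem (hle i (hc i)) ht
        · simpa [hbdef, hij, hik] using hle i (hc i)
    have hbsum : ∑ i, b i = 0 := by
      rw [hbdef]
      rw [Finset.sum_add_distrib, Finset.sum_add_distrib, hcsum,
        Finset.sum_ite_eq' Finset.univ j fun _ => -s,
        Finset.sum_ite_eq' Finset.univ k fun _ => t]
      simp only [Finset.mem_univ, if_true]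
      abel
    have hbj := hind b hbS hbsum j
    have hsB : s ∈ B := by
      have : c j - s = 0 := by simpa [hbdef, hjk, sub_eq_add_neg] using hbj
      have hcs : s = c j := (sub_eq_zero.mp this).symm
      rw [hcs]
      exact le_iSup S' j (hc j)
    have : x = (a + s) := hxs.symm
    rw [this]
    exact (B ⊔ C).add_mem ha (AddSubgroup.mem_sup_left hsB)
  · exact le_inf le_sup_left le_sup_left
end
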